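/- (Theorem 10, stability for UMAP clusters.) Let X ⊆ Y be finite sets with compatible neighbourhood systems: N_x ⊆ X \ {x} with weights d_x(x,z) ∈ (0,∞), N'_y ⊆ Y \ {y} with weights d'_y(y,z) ∈ (0,∞), N_x ⊆ N'_x and d'_x(x,z) ≤ d_x(x,z) for all x ∈ X, z ∈ N_x. Let D and D' be the UMAP ep-metrics on X and Y, let E be a global connected component of (X,D) and F a global connected component of (Y,D') with E ⊆ F. Let m ≥ 1 satisfy D(u,v) ≤ m · D'(u,v) for all u, v ∈ E, and let r > 0 be such that for every y ∈ F there is an x ∈ E with D'(y,x) < r. For s ∈ [0,∞), let ~_{E,s} be the equivalence relation on E generated by {(u,v) ∈ E × E : D_x(u,v) ≤ s for some x ∈ X}, and let ~_{F,s} be the equivalence relation on F generated by {(u,v) ∈ F × F : D'_y(u,v) ≤ s for some y ∈ Y}. Then there exists θ : F → E with θ(x) = x for all x ∈ E such that for every s ∈ [0,∞): (i) if u, v ∈ E and u ~_{E,s} v, then u ~_{F,s} v; (ii) if u, v ∈ F and u ~_{F,s} v, then θ(u) ~_{E, m(s+2r)} θ(v); and (iii) u ~_{F, m(s+2r)} θ(u)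 for every u ∈ F. Hence the interleaving diagram π₀V(X,N)(E)_s → π₀V(Y,N')(F)_s → π₀V(X,N)(E)_{m(s+2r)} → π₀V(Y,N')(F)_{m(s+2r)} commutes. -/

import Mathlib

open scoped ENNReal NNReal

/-- `d` is an extended pseudo-metric on `X`: it takes values in `[0,∞]`,
vanishes on the diagonal, is symmetric, and satisfies the triangle inequality. -/
structure IsEPMetric {X : Type*} (d : X → X → ℝ≥0∞) : Prop where
  refl : ∀ x, d x x = 0
  symm : ∀ x y, d x y = d y x
  triangle : ∀ x y z, d x z ≤ d x y + d y z

/-- The set of costs `Σ_{j=1}^{n} d_{i_j}(x_{j-1}, x_j)` of finite chains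
`x = x₀, x₁, …, x_n = y` together with choices of indices `i₁, …, i_n`. -/
def chainCosts {X I : Type*} (d : I → X → X → ℝ≥0∞) (x y : X) : Set ℝ≥0∞ :=
  { c | ∃ (n : ℕ) (p : Fin (n + 1) → X) (ix : Fin n → I),
      p 0 = x ∧ p (Fin.last n) = y ∧
      c = ∑ j : Fin n, d (ix j) (p j.castSucc) (p j.succ) }

/-- The wedge ep-metric `D` of a family of ep-metrics: the infimum of the
costs of all finite chains from `x` to `y`. -/
noncomputable def wedgeDist {X I : Type*} (d : I → X → X → ℝ≥0∞) (x y : X) : ℝ≥0∞ :=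
  sInf (chainCosts d x y)

open Classical in
/-- The ep-metric `D_z` on `X` determined by a centre `z`, its set of
neighbours `N z` and weights `w z -`:  `D_z(u,u) = 0`;
`D_z(z,y) = D_z(y,z) = w z y` for `y ∈ N z`;
`D_z(y,y') = w z y + w z y'` for distinct `y, y' ∈ N z`; and
`D_z(u,v) = ∞` for all other pairs `u ≠ v`. -/
noncomputable def starDist {X : Type*} (N : X → Set X) (w : X → X → ℝ≥0∞)
    (z : X) : X → X → ℝ≥0∞ := fun u v =>
  if u = v then 0
  else if u = z ∧ v ∈ N z then w z v
  else if v = z ∧ u ∈ N z then w z u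
  else if u ∈ N z ∧ v ∈ N z then w z u + w z v
  else ⊤

/-- The UMAP ep-metric `D = ∨_{z ∈ X} D_z`, the wedge of the ep-metrics
`D_z` over all centres `z ∈ X`. -/
noncomputable def umapDist {X : Type*} (N : X → Set X) (w : X → X → ℝ≥0∞) :
    X → X → ℝ≥0∞ :=
  wedgeDist (fun z : X => starDist N w z)

/-- `E` is a global connected component of the ep-metric space `(Z,d)`:
it is an equivalence class of the relation `d(u,v) < ∞`. -/
def IsGlobalComponent {Z : Type*} (d : Z → Z → ℝ≥0∞) (E : Set Z) : Prop :=
  ∃ u : Z, E = {v | d u v < ⊤}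

/-- The set of UMAP clusters `π₀V(Z,N)(E)_s` is the set of equivalence classes
of `E` for this relation: the equivalence relation generated by the pairs
`(u,v)` of elements of `E` with `D_z(u,v) ≤ s` for some centre `z`. -/
def umapClusterRel {Z : Type*} (N : Z → Set Z) (w : Z → Z → ℝ≥0∞)
    (E : Set Z) (s : ℝ≥0∞) : Z → Z → Prop :=
  Relation.EqvGen (fun u v => u ∈ E ∧ v ∈ E ∧ ∃ z : Z, starDist N w z u v ≤ s)


section Aux

variable {X I : Type*}

lemma zero_mem_chainCosts (d : I → X → X → ℝ≥0∞) (x : X) : 0 ∈ chainCosts d x x :=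
  ⟨0, fun _ => x, Fin.elim0, rfl, rfl, by simp⟩

lemma wedgeDist_self (d : I → X → X → ℝ≥0∞) (x : X) : wedgeDist d x x = 0 :=
  le_antisymm (sInf_le (zero_mem_chainCosts d x)) zero_le

lemma single_mem_chainCosts (d : I → X → X → ℝ≥0∞) (k : I) (x y : X) :
    d k x y ∈ chainCosts d x y :=
  ⟨1, ![x, y], fun _ => k, rfl, rfl, by simp⟩

lemma wedgeDist_le_single (d : I → X → X → ℝ≥0∞) (k : I) (x y : X) :
    wedgeDist d x y ≤ d k x y := sInf_le (single_mem_chainCosts d k x y)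

lemma chainCosts_snoc {d : I → X → X → ℝ≥0∞} {x y : X} {c : ℝ≥0∞}
    (h : c ∈ chainCosts d x y) (k : I) (z : X) :
    c + d k y z ∈ chainCosts d x z := by
  obtain ⟨n, p, ix, h0, hl, rfl⟩ := h
  refine ⟨n + 1, Fin.snoc p z, Fin.snoc ix k,
    by rw [← Fin.castSucc_zero, Fin.snoc_castSucc, h0], by simp, ?_⟩
  rw [Fin.sum_univ_castSucc]
  congr 1
  · refine Finset.sum_congr rfl fun j _ => ?_
    simp [Fin.snoc_castSucc, -Fin.castSucc_succ, Fin.succ_castSucc]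
  · simp [Fin.succ_last, hl]

lemma wedgeDist_le_add (d : I → X → X → ℝ≥0∞) (x y z : X) (k : I) :
    wedgeDist d x z ≤ wedgeDist d x y + d k y z := by
  rw [wedgeDist, wedgeDist, ENNReal.sInf_add]
  exact le_iInf₂ fun c hc => sInf_le (chainCosts_snoc hc k z)

lemma wedge_chain_aux (d : I → X → X → ℝ≥0∞) (x : X) :
    ∀ (n : ℕ) (p : Fin (n + 1) → X) (ix : Fin n → I),
      wedgeDist d x (p (Fin.last n)) ≤
        wedgeDist d x (p 0) + ∑ j : Fin n, d (ix j) (p j.castSucc) (p j.succ) := by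
  intro n
  induction n with
  | zero => intro p ix; simp [Fin.last]
  | succ n IH =>
    intro p ix
    have h1 := IH (p ∘ Fin.castSucc) (ix ∘ Fin.castSucc)
    have h2 := wedgeDist_le_add d x (p ((Fin.last n).castSucc)) (p (Fin.last (n + 1)))
      (ix (Fin.last n))
    rw [Fin.sum_univ_castSucc]
    calc wedgeDist d x (p (Fin.last (n + 1)))
        ≤ wedgeDist d x (p ((Fin.last n).castSucc))
            + d (ix (Fin.last n)) (p ((Fin.last n).castSucc)) (p (Fin.last (n + 1))) := by
          have h3 : (Fin.last n).succ = Fin.last (n + 1) := Fin.succ_last n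
          simpa [h3] using h2
      _ ≤ (wedgeDist d x (p 0)
            + ∑ j : Fin n, d (ix j.castSucc) (p j.castSucc.castSucc) (p j.castSucc.succ))
            + d (ix (Fin.last n)) (p ((Fin.last n).castSucc)) (p (Fin.last (n + 1))) := by
          gcongr
          simpa [Function.comp, -Fin.castSucc_succ, Fin.succ_castSucc] using h1
      _ = _ := by rw [add_assoc]; simp [Fin.succ_last]

lemma wedgeDist_triangle (d : I → X → X → ℝ≥0∞) (x y z : X) :
    wedgeDist d x z ≤ wedgeDist d x y + wedgeDist d y z := by
  rw [add_comm]
  show wedgeDist d x z ≤ sInf (chainCosts d y z) + wedgeDist d x y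
  rw [ENNReal.sInf_add]
  refine le_iInf₂ fun c hc => ?_
  rw [add_comm]
  obtain ⟨n, p, ix, h0, hl, rfl⟩ := hc
  have h := wedge_chain_aux d x n p ix
  rw [h0, hl] at h
  exact h

lemma umapDist_triangle (N : X → Set X) (w : X → X → ℝ≥0∞) (x y z : X) :
    umapDist N w x z ≤ umapDist N w x y + umapDist N w y z :=
  wedgeDist_triangle _ x y z

lemma starDist_symm (N : X → Set X) (w : X → X → ℝ≥0∞) (z u v : X) :
    starDist N w z u v = starDist N w z v u := by
  classical
  unfold starDist
  split_ifs <;> simp_all [add_comm]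

lemma chainCosts_rev {d : I → X → X → ℝ≥0∞} (hd : ∀ k u v, d k u v = d k v u)
    {x y : X} {c : ℝ≥0∞} (h : c ∈ chainCosts d x y) : c ∈ chainCosts d y x := by
  obtain ⟨n, p, ix, h0, hl, rfl⟩ := h
  refine ⟨n, p ∘ Fin.rev, ix ∘ Fin.rev, by simp [Fin.rev_zero, hl],
    by simp [Fin.rev_last, h0], ?_⟩
  refine Fintype.sum_equiv Fin.revPerm _ _ fun j => ?_
  simp only [Function.comp, Fin.revPerm_apply, Fin.rev_rev, Fin.rev_castSucc, Fin.rev_succ]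
  rw [hd]

lemma wedgeDist_symm {d : I → X → X → ℝ≥0∞} (hd : ∀ k u v, d k u v = d k v u) (x y : X) :
    wedgeDist d x y = wedgeDist d y x := by
  unfold wedgeDist
  exact le_antisymm (sInf_le_sInf fun c hc => chainCosts_rev hd hc)
    (sInf_le_sInf fun c hc => chainCosts_rev hd hc)

lemma umapDist_symm (N : X → Set X) (w : X → X → ℝ≥0∞) (x y : X) :
    umapDist N w x y = umapDist N w y x :=
  wedgeDist_symm (fun k => starDist_symm N w k) x y

lemma clusterRel_chain_aux (N : X → Set X) (w : X → X → ℝ≥0∞) (y₀ : X) (t : ℝ≥0∞)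
    (ht : t < ⊤) :
    ∀ (n : ℕ) (p : Fin (n + 1) → X) (ix : Fin n → X),
      umapDist N w y₀ (p 0) < ⊤ →
      (∑ j : Fin n, starDist N w (ix j) (p j.castSucc) (p j.succ)) ≤ t →
      umapClusterRel N w {v | umapDist N w y₀ v < ⊤} t (p 0) (p (Fin.last n)) := by
  intro n
  induction n with
  | zero => intro p ix _ _; exact Relation.EqvGen.refl _
  | succ n IH =>
    intro p ix h0 hsum
    rw [Fin.sum_univ_castSucc] at hsum
    have hS' : (∑ j : Fin n, starDist N w ((ix ∘ Fin.castSucc) j)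
        ((p ∘ Fin.castSucc) j.castSucc) ((p ∘ Fin.castSucc) j.succ)) ≤ t := by
      refine le_trans ?_ (le_trans le_self_add hsum)
      apply le_of_eq
      refine Finset.sum_congr rfl fun j _ => ?_
      simp [Function.comp, -Fin.castSucc_succ, Fin.succ_castSucc]
    have IH' := IH (p ∘ Fin.castSucc) (ix ∘ Fin.castSucc) (by simpa using h0) hS'
    have hq : umapDist N w y₀ (p ((Fin.last n).castSucc)) < ⊤ := by
      have h1 := wedge_chain_aux (fun z : X => starDist N w z) y₀ n
        (p ∘ Fin.castSucc) (ix ∘ Fin.castSucc)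
      simp only [Function.comp] at h1
      calc umapDist N w y₀ (p ((Fin.last n).castSucc)) ≤ _ := h1
        _ < ⊤ := by
          refine ENNReal.add_lt_top.mpr ⟨by simpa [umapDist] using h0, lt_of_le_of_lt ?_ ht⟩
          refine le_trans (le_of_eq ?_) (le_trans le_self_add hsum)
          refine Finset.sum_congr rfl fun j _ => ?_
          simp [-Fin.castSucc_succ, Fin.succ_castSucc]
    have hb : umapDist N w y₀ (p (Fin.last (n + 1))) < ⊤ := by
      have h1 := wedge_chain_aux (fun z : X => starDist N w z) y₀ (n + 1) p ix
      calc umapDist N w y₀ (p (Fin.last (n + 1))) ≤ _ := h1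
        _ < ⊤ := ENNReal.add_lt_top.mpr ⟨h0, lt_of_le_of_lt
            (by rw [Fin.sum_univ_castSucc]; exact hsum) ht⟩
    have hstep : starDist N w (ix (Fin.last n)) (p ((Fin.last n).castSucc))
        (p (Fin.last (n + 1))) ≤ t := by
      refine le_trans ?_ hsum
      rw [← Fin.succ_last]
      exact le_add_self
    have gen : umapClusterRel N w {v | umapDist N w y₀ v < ⊤} t
        (p ((Fin.last n).castSucc)) (p (Fin.last (n + 1))) :=
      Relation.EqvGen.rel _ _ ⟨hq, hb, ix (Fin.last n), hstep⟩
    have h00 : (p ∘ Fin.castSucc) 0 = p 0 := by simp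
    have hll : (p ∘ Fin.castSucc) (Fin.last n) = p ((Fin.last n).castSucc) := rfl
    rw [h00, hll] at IH'
    exact Relation.EqvGen.trans _ _ _ IH' gen

lemma starDist_map_le {X Y : Type*} {i : X → Y} (hi : Function.Injective i)
    {NX : X → Set X} {wX : X → X → ℝ≥0∞} {NY : Y → Set Y} {wY : Y → Y → ℝ≥0∞}
    (hsub : ∀ x z, z ∈ NX x → i z ∈ NY (i x))
    (hcomp : ∀ x z, z ∈ NX x → wY (i x) (i z) ≤ wX x z)
    (z u v : X) :
    starDist NY wY (i z) (i u) (i v) ≤ starDist NX wX z u v := by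
  classical
  unfold starDist
  rcases eq_or_ne u v with rfl | huv
  · simp
  · rw [if_neg huv, if_neg (fun h => huv (hi h))]
    by_cases h1 : u = z ∧ v ∈ NX z
    · obtain ⟨rfl, hv⟩ := h1
      rw [if_pos ⟨rfl, hsub _ _ hv⟩, if_pos ⟨rfl, hv⟩]
      exact hcomp _ _ hv
    · by_cases h2 : v = z ∧ u ∈ NX z
      · obtain ⟨rfl, hu⟩ := h2
        rw [if_neg (fun h => huv (hi h.1)), if_pos ⟨rfl, hsub _ _ hu⟩,
          if_neg h1, if_pos ⟨rfl, hu⟩]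
        exact hcomp _ _ hu
      · by_cases h3 : u ∈ NX z ∧ v ∈ NX z
        · have huz : u ≠ z := fun h => h1 ⟨h, h3.2⟩
          have hvz : v ≠ z := fun h => h2 ⟨h, h3.1⟩
          rw [if_neg h1, if_neg h2, if_pos h3,
            if_neg (fun h => huz (hi h.1)), if_neg (fun h => hvz (hi h.1)),
            if_pos ⟨hsub _ _ h3.1, hsub _ _ h3.2⟩]
          exact add_le_add (hcomp _ _ h3.1) (hcomp _ _ h3.2)
        · rw [if_neg h1, if_neg h2, if_neg h3]
          exact le_top

end Aux

/-- Theorem 10, stability for UMAP clusters: given an inclusion `i : X ⊆ Y` of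
finite sets with compatible neighbourhood systems, UMAP ep-metrics `D`, `D'`,
global connected components `E ⊆ X`, `F ⊆ Y` with `i(E) ⊆ F`, a compression
factor `m ≥ 1` on `E`, and `r > 0` such that every point of `F` is within
`D'`-distance `< r` of a point of `i(E)`, there is a retraction `θ : F → E`
inducing an interleaving of the systems of clusters
`π₀V(X,N)(E)` and `π₀V(Y,N')(F)`:
(i) `u ~_{E,s} v` implies `i u ~_{F,s} i v`;
(ii) `u ~_{F,s} v` implies `θ u ~_{E,m(s+2r)} θ v`; and
(iii) `u ~_{F,m(s+2r)} i (θ u)` for every `u ∈ F`. -/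
theorem umap_cluster_stability {X Y : Type*} [Finite X] [Finite Y]
    (i : X → Y) (hi : Function.Injective i)
    (NX : X → Set X) (wX : X → X → ℝ≥0∞) (hNX : ∀ x, x ∉ NX x)
    (hwX : ∀ x z, z ∈ NX x → 0 < wX x z ∧ wX x z < ⊤)
    (NY : Y → Set Y) (wY : Y → Y → ℝ≥0∞) (hNY : ∀ y, y ∉ NY y)
    (hwY : ∀ y z, z ∈ NY y → 0 < wY y z ∧ wY y z < ⊤)
    (hsub : ∀ x z, z ∈ NX x → i z ∈ NY (i x))
    (hcomp : ∀ x z, z ∈ NX x → wY (i x) (i z) ≤ wX x z)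
    (E : Set X) (hE : IsGlobalComponent (umapDist NX wX) E)
    (F : Set Y) (hF : IsGlobalComponent (umapDist NY wY) F)
    (hEF : i '' E ⊆ F)
    (m : ℝ≥0) (hm1 : 1 ≤ m)
    (hm : ∀ u ∈ E, ∀ v ∈ E,
      umapDist NX wX u v ≤ (m : ℝ≥0∞) * umapDist NY wY (i u) (i v))
    (r : ℝ≥0) (hr : 0 < r)
    (hnear : ∀ y ∈ F, ∃ x ∈ E, umapDist NY wY y (i x) < (r : ℝ≥0∞)) :
    ∃ θ : Y → X, (∀ y ∈ F, θ y ∈ E) ∧ (∀ x ∈ E, θ (i x) = x) ∧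
      ∀ s : ℝ≥0,
        -- (i) `i` maps clusters of `E` at level `s` to clusters of `F`
        (∀ u ∈ E, ∀ v ∈ E, umapClusterRel NX wX E (s : ℝ≥0∞) u v →
          umapClusterRel NY wY F (s : ℝ≥0∞) (i u) (i v)) ∧
        -- (ii) `θ` maps clusters of `F` at level `s` to clusters of `E` at
        -- level `m·(s+2r)`
        (∀ u ∈ F, ∀ v ∈ F, umapClusterRel NY wY F (s : ℝ≥0∞) u v →
          umapClusterRel NX wX E ((m : ℝ≥0∞) * ((s : ℝ≥0∞) + 2 * (r : ℝ≥0∞)))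
            (θ u) (θ v)) ∧
        -- (iii) the interleaving diagram commutes: `u` and `i (θ u)` lie in
        -- the same cluster of `F` at level `m·(s+2r)`
        (∀ u ∈ F, umapClusterRel NY wY F ((m : ℝ≥0∞) * ((s : ℝ≥0∞) + 2 * (r : ℝ≥0∞)))
          u (i (θ u))) := by
  classical
  cases isEmpty_or_nonempty Y with
  | inl hY =>
    exact ⟨fun y => (hY.false y).elim, fun y => (hY.false y).elim,
      fun x _ => (hY.false (i x)).elim,
      fun s => ⟨fun u _ => (hY.false (i u)).elim, fun u _ => (hY.false u).elim,
        fun u _ => (hY.false u).elim⟩⟩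
  | inr hY =>
    obtain ⟨ex, hEeq⟩ := hE
    obtain ⟨fy, hFeq⟩ := hF
    have hfyF : fy ∈ F := by
      rw [hFeq]
      show umapDist NY wY fy fy < ⊤
      simp only [umapDist]
      rw [wedgeDist_self]
      exact ENNReal.zero_lt_top
    obtain ⟨x₀, hx₀E, _⟩ := hnear fy hfyF
    have key : ∀ y : Y, ∃ x : X,
        (y ∈ F → x ∈ E ∧ umapDist NY wY y (i x) < (r : ℝ≥0∞)) ∧
        (∀ x' ∈ E, i x' = y → x = x') := by
      intro y
      by_cases hyF : y ∈ F
      · by_cases hyi : ∃ x ∈ E, i x = y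
        · obtain ⟨x, hxE, rfl⟩ := hyi
          refine ⟨x, fun _ => ⟨hxE, ?_⟩, fun x' _ h => (hi h).symm⟩
          show wedgeDist _ (i x) (i x) < _
          rw [wedgeDist_self]
          exact ENNReal.coe_pos.mpr hr
        · obtain ⟨x, hxE, hd⟩ := hnear y hyF
          exact ⟨x, fun _ => ⟨hxE, hd⟩, fun x' hx' h => (hyi ⟨x', hx', h⟩).elim⟩
      · exact ⟨x₀, fun h => absurd h hyF,
          fun x' hx' h => absurd (h ▸ hEF ⟨x', hx', rfl⟩) hyF⟩
    choose θ hθ1 hθ2 using key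
    have hθE : ∀ y ∈ F, θ y ∈ E := fun y hy => (hθ1 y hy).1
    have hθd : ∀ y ∈ F, umapDist NY wY y (i (θ y)) < (r : ℝ≥0∞) := fun y hy => (hθ1 y hy).2
    have hθi : ∀ x ∈ E, θ (i x) = x := fun x hx => hθ2 (i x) x hx rfl
    -- helper: from a chain with small cost starting in the component, build the relation
    have relE : ∀ t : ℝ≥0∞, t < ⊤ → ∀ a b : X, a ∈ E →
        ∀ c ∈ chainCosts (fun z : X => starDist NX wX z) a b, c ≤ t →
        umapClusterRel NX wX E t a b := by
      intro t ht a b ha c hc hct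
      obtain ⟨n, p, ix, h0, hl, rfl⟩ := hc
      rw [hEeq] at ha ⊢
      have ha' : umapDist NX wX ex (p 0) < ⊤ := by rw [h0]; exact ha
      have h := clusterRel_chain_aux NX wX ex t ht n p ix ha' hct
      rwa [h0, hl] at h
    have relF : ∀ t : ℝ≥0∞, t < ⊤ → ∀ a b : Y, a ∈ F →
        ∀ c ∈ chainCosts (fun z : Y => starDist NY wY z) a b, c ≤ t →
        umapClusterRel NY wY F t a b := by
      intro t ht a b ha c hc hct
      obtain ⟨n, p, ix, h0, hl, rfl⟩ := hc
      rw [hFeq] at ha ⊢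
      have ha' : umapDist NY wY fy (p 0) < ⊤ := by rw [h0]; exact ha
      have h := clusterRel_chain_aux NY wY fy t ht n p ix ha' hct
      rwa [h0, hl] at h
    refine ⟨θ, hθE, hθi, fun s => ⟨?_, ?_, ?_⟩⟩
    · -- (i)
      intro u hu v hv h
      clear hu hv
      induction h with
      | rel a b hab =>
        obtain ⟨haE, hbE, z, hz⟩ := hab
        exact Relation.EqvGen.rel _ _ ⟨hEF ⟨a, haE, rfl⟩, hEF ⟨b, hbE, rfl⟩, i z,
          le_trans (starDist_map_le hi hsub hcomp z a b) hz⟩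
      | refl a => exact Relation.EqvGen.refl _
      | symm a b _ ih => exact Relation.EqvGen.symm _ _ ih
      | trans a b c _ _ ih1 ih2 => exact Relation.EqvGen.trans _ _ _ ih1 ih2
    · -- (ii)
      have hsr_top : (m : ℝ≥0∞) * ((s : ℝ≥0∞) + 2 * (r : ℝ≥0∞)) < ⊤ := by
        refine ENNReal.mul_lt_top ENNReal.coe_lt_top (ENNReal.add_lt_top.mpr
          ⟨ENNReal.coe_lt_top, ENNReal.mul_lt_top (by norm_num) ENNReal.coe_lt_top⟩)
      intro u hu v hv h
      clear hu hv
      induction h with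
      | rel a b hab =>
        obtain ⟨haF, hbF, z, hz⟩ := hab
        have d1 : umapDist NY wY (i (θ a)) a < (r : ℝ≥0∞) := by
          rw [umapDist_symm]; exact hθd a haF
        have d2 : umapDist NY wY a b ≤ (s : ℝ≥0∞) :=
          le_trans (wedgeDist_le_single _ z a b) hz
        have d3 : umapDist NY wY b (i (θ b)) < (r : ℝ≥0∞) := hθd b hbF
        have tri : umapDist NY wY (i (θ a)) (i (θ b)) ≤
            umapDist NY wY (i (θ a)) a + (umapDist NY wY a b + umapDist NY wY b (i (θ b))) :=
          le_trans (umapDist_triangle NY wY _ a _)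
            (by gcongr; exact umapDist_triangle NY wY a b _)
        have hlt : umapDist NY wY (i (θ a)) (i (θ b)) < (s : ℝ≥0∞) + 2 * (r : ℝ≥0∞) := by
          refine lt_of_le_of_lt tri (lt_of_lt_of_le
            (ENNReal.add_lt_add d1 (ENNReal.add_lt_add_of_le_of_lt
              (lt_of_le_of_lt d2 ENNReal.coe_lt_top).ne d2 d3)) ?_)
          rw [two_mul]
          apply le_of_eq
          ring
        have hXlt : umapDist NX wX (θ a) (θ b) < (m : ℝ≥0∞) * ((s : ℝ≥0∞) + 2 * (r : ℝ≥0∞)) := by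
          refine lt_of_le_of_lt (hm _ (hθE a haF) _ (hθE b hbF)) ?_
          refine (ENNReal.mul_lt_mul_iff_right ?_ ENNReal.coe_ne_top).mpr hlt
          exact_mod_cast (lt_of_lt_of_le one_pos hm1).ne'
        obtain ⟨c, hc, hclt⟩ := sInf_lt_iff.mp hXlt
        exact relE _ hsr_top (θ a) (θ b) (hθE a haF) c hc hclt.le
      | refl a => exact Relation.EqvGen.refl _
      | symm a b _ ih => exact Relation.EqvGen.symm _ _ ih
      | trans a b c _ _ ih1 ih2 => exact Relation.EqvGen.trans _ _ _ ih1 ih2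
    · -- (iii)
      intro u hu
      have hsr_top : (m : ℝ≥0∞) * ((s : ℝ≥0∞) + 2 * (r : ℝ≥0∞)) < ⊤ :=
        ENNReal.mul_lt_top ENNReal.coe_lt_top (ENNReal.add_lt_top.mpr
          ⟨ENNReal.coe_lt_top, ENNReal.mul_lt_top (by norm_num) ENNReal.coe_lt_top⟩)
      have hrle : (r : ℝ≥0∞) ≤ (m : ℝ≥0∞) * ((s : ℝ≥0∞) + 2 * (r : ℝ≥0∞)) := by
        refine le_trans ?_ (le_mul_of_one_le_left zero_le (by exact_mod_cast hm1))
        calc (r : ℝ≥0∞) ≤ 2 * (r : ℝ≥0∞) := by rw [two_mul]; exact le_self_add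
          _ ≤ _ := le_add_self
      obtain ⟨c, hc, hclt⟩ := sInf_lt_iff.mp (hθd u hu)
      exact relF _ hsr_top u (i (θ u)) hu c hc (le_trans hclt.le hrle)
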